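/- Let A be the 6×3 (0,1)-matrix with rows (1,1,0),(1,1,0),(1,0,1),(1,0,1),(0,1,1),(0,1,1), and let B be the 6×6 (0,1)-matrix with rows (1,1,0,0,1,0),(1,1,1,0,0,1),(1,1,1,1,0,0),(1,0,1,0,1,0),(1,1,0,1,0,1),(1,0,0,1,0,1). Let L be the 8×12 matrix whose first 6 rows are the horizontal concatenation [A | I₆ | a₂ | a₃ | a₅] (I₆ the 6×6 identity, a_i the 6-entry column with a 1 in position i and 0s elsewhere), whose 7th row is all 1s and whose 8th row is all 0s; let R be the 8×12 matrix whose first 6 rows are [B | O] (O the 6×6 zero matrix), whose 7th row is all 1s and whose 8th row is all 0s. Then L is binary-combinations majorized by R: for every v ∈ {0,1}^8, vL is majorized by vR. -/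

import Mathlib

/-- `x` is majorized by `y`: for every `k`, the sum of the `k` largest entries of `x`
is at most the sum of the `k` largest entries of `y` (expressed as: every `k`-element
partial sum of `x` is dominated by some `k`-element partial sum of `y`), and the total
sums agree. -/
def MajorizedBy {d : ℕ} (x y : Fin d → ℝ) : Prop :=
  (∀ s : Finset (Fin d), ∃ t : Finset (Fin d), t.card = s.card ∧
    ∑ i ∈ s, x i ≤ ∑ i ∈ t, y i) ∧
  ∑ i, x i = ∑ i, y i

def L13 : Fin 8 → Fin 12 → ℝ :=
  ![![1, 1, 0, 1, 0, 0, 0, 0, 0, 0, 0, 0],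
     ![1, 1, 0, 0, 1, 0, 0, 0, 0, 1, 0, 0],
     ![1, 0, 1, 0, 0, 1, 0, 0, 0, 0, 1, 0],
     ![1, 0, 1, 0, 0, 0, 1, 0, 0, 0, 0, 0],
     ![0, 1, 1, 0, 0, 0, 0, 1, 0, 0, 0, 1],
     ![0, 1, 1, 0, 0, 0, 0, 0, 1, 0, 0, 0],
     ![1, 1, 1, 1, 1, 1, 1, 1, 1, 1, 1, 1],
     ![0, 0, 0, 0, 0, 0, 0, 0, 0, 0, 0, 0]]

def R13 : Fin 8 → Fin 12 → ℝ :=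
  ![![1, 1, 0, 0, 1, 0, 0, 0, 0, 0, 0, 0],
     ![1, 1, 1, 0, 0, 1, 0, 0, 0, 0, 0, 0],
     ![1, 1, 1, 1, 0, 0, 0, 0, 0, 0, 0, 0],
     ![1, 0, 1, 0, 1, 0, 0, 0, 0, 0, 0, 0],
     ![1, 1, 0, 1, 0, 1, 0, 0, 0, 0, 0, 0],
     ![1, 0, 0, 1, 0, 1, 0, 0, 0, 0, 0, 0],
     ![1, 1, 1, 1, 1, 1, 1, 1, 1, 1, 1, 1],
     ![0, 0, 0, 0, 0, 0, 0, 0, 0, 0, 0, 0]]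

/- ### Auxiliary material -/

def LN13 : Fin 8 → Fin 12 → ℕ :=
  ![![1, 1, 0, 1, 0, 0, 0, 0, 0, 0, 0, 0],
     ![1, 1, 0, 0, 1, 0, 0, 0, 0, 1, 0, 0],
     ![1, 0, 1, 0, 0, 1, 0, 0, 0, 0, 1, 0],
     ![1, 0, 1, 0, 0, 0, 1, 0, 0, 0, 0, 0],
     ![0, 1, 1, 0, 0, 0, 0, 1, 0, 0, 0, 1],
     ![0, 1, 1, 0, 0, 0, 0, 0, 1, 0, 0, 0],
     ![1, 1, 1, 1, 1, 1, 1, 1, 1, 1, 1, 1],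
     ![0, 0, 0, 0, 0, 0, 0, 0, 0, 0, 0, 0]]

def RN13 : Fin 8 → Fin 12 → ℕ :=
  ![![1, 1, 0, 0, 1, 0, 0, 0, 0, 0, 0, 0],
     ![1, 1, 1, 0, 0, 1, 0, 0, 0, 0, 0, 0],
     ![1, 1, 1, 1, 0, 0, 0, 0, 0, 0, 0, 0],
     ![1, 0, 1, 0, 1, 0, 0, 0, 0, 0, 0, 0],
     ![1, 1, 0, 1, 0, 1, 0, 0, 0, 0, 0, 0],
     ![1, 0, 0, 1, 0, 1, 0, 0, 0, 0, 0, 0],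
     ![1, 1, 1, 1, 1, 1, 1, 1, 1, 1, 1, 1],
     ![0, 0, 0, 0, 0, 0, 0, 0, 0, 0, 0, 0]]

def xN (M : Fin 8 → Fin 12 → ℕ) (b : Fin 8 → Bool) (n : Fin 12) : ℕ :=
  ∑ i, if b i then M i n else 0

/-- The entries of `x`, sorted in decreasing order. -/
def sortD {d : ℕ} (x : Fin d → ℕ) : List ℕ := List.insertionSort (· ≥ ·) (List.ofFn x)

set_option maxRecDepth 10000 in
set_option maxHeartbeats 4000000 in
lemma key13 : ∀ b : Fin 8 → Bool,
    (∀ k ∈ Finset.range 13,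
      ((sortD (xN LN13 b)).take k).sum ≤ ((sortD (xN RN13 b)).take k).sum) ∧
    (∑ n, xN LN13 b n = ∑ n, xN RN13 b n) := by decide

/-- Any sub-multiset of a decreasingly sorted list has sum at most the sum of
the corresponding prefix of the list. -/
lemma sum_le_take_of_sorted :
    ∀ l : List ℕ, l.Pairwise (· ≥ ·) →
      ∀ u : Multiset ℕ, u ≤ (l : Multiset ℕ) → u.sum ≤ (l.take (Multiset.card u)).sum := by
  intro l
  induction l with
  | nil =>
    intro _ u hu
    rw [Multiset.coe_nil, Multiset.le_zero] at hu
    simp [hu]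
  | cons a l ih =>
    intro hs u hu
    rcases eq_or_ne u 0 with rfl | hne
    · simp
    rw [List.pairwise_cons] at hs
    rw [show ((a :: l : List ℕ) : Multiset ℕ) = a ::ₘ (l : Multiset ℕ) from rfl] at hu
    by_cases ha : a ∈ u
    · obtain ⟨u', rfl⟩ := Multiset.exists_cons_of_mem ha
      have h1 : u' ≤ (l : Multiset ℕ) := (Multiset.cons_le_cons_iff a).mp hu
      simpa [Multiset.sum_cons, List.take_succ_cons] using
        add_le_add_left (ih hs.2 u' h1) a
    · have hle : u ≤ (l : Multiset ℕ) := by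
        rw [Multiset.le_iff_count]
        intro c
        have := Multiset.le_iff_count.mp hu c
        rcases eq_or_ne c a with rfl | hca
        · simp [Multiset.count_eq_zero_of_notMem ha]
        · simpa [Multiset.count_cons, hca, List.count_cons, hca.symm] using this
      obtain ⟨b, hb⟩ := Multiset.exists_mem_of_ne_zero hne
      obtain ⟨u', rfl⟩ := Multiset.exists_cons_of_mem hb
      have hu' : u' ≤ (l : Multiset ℕ) :=
        le_trans (Multiset.le_cons_self u' b) hle
      have hbl : b ∈ l := by
        have := Multiset.mem_of_le hle (Multiset.mem_cons_self b u')
        simpa using this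
      have hba : b ≤ a := hs.1 b hbl
      simpa [Multiset.sum_cons, List.take_succ_cons] using
        add_le_add hba (ih hs.2 u' hu')

/-- A sub-multiset of a mapped multiset comes from a sub-multiset. -/
lemma exists_le_map {α β : Type*} [DecidableEq α] (f : α → β) :
    ∀ (u : Multiset β) (m : Multiset α), u ≤ m.map f → ∃ m' ≤ m, m'.map f = u := by
  intro u
  induction u using Multiset.induction_on with
  | empty => exact fun m _ => ⟨0, Multiset.zero_le m, rfl⟩
  | cons b u ih =>
    intro m h
    have hb : b ∈ m.map f := Multiset.mem_of_le h (Multiset.mem_cons_self b u)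
    obtain ⟨a, ham, hfa⟩ := Multiset.mem_map.mp hb
    have hmm : m.map f = b ::ₘ (m.erase a).map f := by
      rw [← hfa, ← Multiset.map_cons, Multiset.cons_erase ham]
    rw [hmm] at h
    obtain ⟨m', hm', hmap⟩ := ih _ ((Multiset.cons_le_cons_iff b).mp h)
    refine ⟨a ::ₘ m', ?_, ?_⟩
    · calc a ::ₘ m' ≤ a ::ₘ m.erase a := Multiset.cons_le_cons a hm'
        _ = m := Multiset.cons_erase ham
    · rw [Multiset.map_cons, hfa, hmap]

lemma sum_sortD {d : ℕ} (x : Fin d → ℕ) : (sortD x).sum = ∑ i, x i := by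
  rw [← List.sum_ofFn (f := x)]
  exact (List.perm_insertionSort _ _).sum_eq

lemma nat_major {d : ℕ} (x y : Fin d → ℕ)
    (h : ∀ k, ((sortD x).take k).sum ≤ ((sortD y).take k).sum)
    (hsum : ∑ i, x i = ∑ i, y i) :
    MajorizedBy (fun i => (x i : ℝ)) (fun i => (y i : ℝ)) := by
  have permx : ((sortD x : List ℕ) : Multiset ℕ) = (List.ofFn x : Multiset ℕ) :=
    Quot.sound (List.perm_insertionSort _ _)
  have permy : ((sortD y : List ℕ) : Multiset ℕ) = (List.ofFn y : Multiset ℕ) :=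
    Quot.sound (List.perm_insertionSort _ _)
  have leny : (sortD y).length = d := by
    rw [sortD, List.length_insertionSort, List.length_ofFn]
  constructor
  · intro s
    set k := s.card with hk
    have hkd : k ≤ d := by
      simpa using Finset.card_le_univ s
    -- upper bound for the left sum
    have hu : (s.val.map x) ≤ ((sortD x : List ℕ) : Multiset ℕ) := by
      rw [permx, ← Fin.univ_val_map]
      exact Multiset.map_le_map (Finset.val_le_iff.mpr (Finset.subset_univ s))
    have hA : ∑ i ∈ s, x i ≤ ((sortD x).take k).sum := by
      have h1 := sum_le_take_of_sorted (sortD x)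
        (List.pairwise_insertionSort _ _) (s.val.map x) hu
      rw [Multiset.card_map] at h1
      rw [Finset.sum_eq_multiset_sum]
      exact h1
    -- witness for the right sum
    have ht : (((sortD y).take k : List ℕ) : Multiset ℕ) ≤ Multiset.map y Finset.univ.val := by
      rw [Fin.univ_val_map, ← permy]
      exact (List.take_sublist k (sortD y)).subperm
    obtain ⟨m', hm'le, hm'map⟩ := exists_le_map y _ _ ht
    have hnodup : m'.Nodup := Multiset.nodup_of_le hm'le Finset.univ.nodup
    refine ⟨⟨m', hnodup⟩, ?_, ?_⟩
    · show Multiset.card m' = k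
      have : Multiset.card (m'.map y) = k := by
        rw [hm'map]
        simp [List.length_take, leny, hkd]
      simpa using this
    · have hB : ∑ i ∈ (⟨m', hnodup⟩ : Finset (Fin d)), y i = ((sortD y).take k).sum := by
        show (m'.map y).sum = _
        rw [hm'map]
        simp
      have : ∑ i ∈ s, x i ≤ ∑ i ∈ (⟨m', hnodup⟩ : Finset (Fin d)), y i := by
        rw [hB]
        exact le_trans hA (h k)
      beta_reduce; exact_mod_cast Nat.cast_le.mpr this
  · beta_reduce; exact_mod_cast hsum

set_option maxHeartbeats 2000000 in
open Classical in
/-- `L13` is binary-combinations majorized by `R13`. -/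
theorem stmt_13 :
    ∀ v : Fin 8 → ℝ, (∀ i, v i = 0 ∨ v i = 1) →
      MajorizedBy (fun n => ∑ i, v i * L13 i n) (fun n => ∑ i, v i * R13 i n) := by
  intro v hv
  set b : Fin 8 → Bool := fun i => if v i = 1 then true else false with hb
  have hvb : ∀ i, v i = if b i then 1 else 0 := by
    intro i
    rcases hv i with h0 | h1
    · simp [hb, h0]
    · simp [hb, h1]
  have hL : ∀ i n, L13 i n = (LN13 i n : ℝ) := by
    intro i n
    fin_cases i <;> fin_cases n <;> norm_num [L13, LN13]
  have hR : ∀ i n, R13 i n = (RN13 i n : ℝ) := by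
    intro i n
    fin_cases i <;> fin_cases n <;> norm_num [R13, RN13]
  have ex : (fun n => ∑ i, v i * L13 i n) = fun n => ((xN LN13 b n : ℕ) : ℝ) := by
    funext n
    rw [xN, Nat.cast_sum]
    refine Finset.sum_congr rfl fun i _ => ?_
    rw [hvb i, hL i n]
    by_cases hbi : b i <;> simp [hbi]
  have ey : (fun n => ∑ i, v i * R13 i n) = fun n => ((xN RN13 b n : ℕ) : ℝ) := by
    funext n
    rw [xN, Nat.cast_sum]
    refine Finset.sum_congr rfl fun i _ => ?_
    rw [hvb i, hR i n]
    by_cases hbi : b i <;> simp [hbi]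
  rw [ex, ey]
  obtain ⟨h1, h2⟩ := key13 b
  refine nat_major _ _ (fun k => ?_) h2
  rcases lt_or_ge k 13 with hk | hk
  · exact h1 k (Finset.mem_range.mpr hk)
  · have lx : (sortD (xN LN13 b)).length = 12 := by
      rw [sortD, List.length_insertionSort, List.length_ofFn]
    have ly : (sortD (xN RN13 b)).length = 12 := by
      rw [sortD, List.length_insertionSort, List.length_ofFn]
    rw [List.take_of_length_le (by omega), List.take_of_length_le (by omega)]
    rw [sum_sortD, sum_sortD, h2]
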